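/- Let (C^•, d, δ) be a finite bi-graded complex of finite-dimensional complex vector spaces whose combinatorial Laplacian Δ_j is bijective for every j = 0, …, n. Then the alternating product of the determinants of the Laplacians is trivial: ∏_{j=0}^{n} det(Δ_j)^{(−1)^j} = 1. -/

import Mathlib

private lemma my_det_prodMap {M N : Type} [AddCommGroup M] [Module ℂ M] [FiniteDimensional ℂ M]
    [AddCommGroup N] [Module ℂ N] [FiniteDimensional ℂ N]
    (f : M →ₗ[ℂ] M) (g : N →ₗ[ℂ] N) :
    LinearMap.det (f.prodMap g) = LinearMap.det f * LinearMap.det g := by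
  classical
  let b₁ := Module.finBasis ℂ M
  let b₂ := Module.finBasis ℂ N
  rw [← LinearMap.det_toMatrix (b₁.prod b₂), LinearMap.toMatrix_prodMap,
    Matrix.det_fromBlocks_zero₂₁, LinearMap.det_toMatrix, LinearMap.det_toMatrix]

private lemma my_det_conj {M N : Type} [AddCommGroup M] [Module ℂ M] [AddCommGroup N] [Module ℂ N]
    (f : M →ₗ[ℂ] M) (g : N →ₗ[ℂ] N) (e : M ≃ₗ[ℂ] N)
    (h : g ∘ₗ (e : M →ₗ[ℂ] N) = (e : M →ₗ[ℂ] N) ∘ₗ f) :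
    LinearMap.det g = LinearMap.det f := by
  have hg : g = (e : M →ₗ[ℂ] N) ∘ₗ f ∘ₗ (e.symm : N →ₗ[ℂ] M) := by
    rw [← LinearMap.comp_assoc, ← h, LinearMap.comp_assoc]
    ext x; simp
  rw [hg, LinearMap.det_conj]

private lemma my_det_restrict_mul {M : Type} [AddCommGroup M] [Module ℂ M] [FiniteDimensional ℂ M]
    (f : M →ₗ[ℂ] M) {p q : Submodule ℂ M} (h : IsCompl p q)
    (hp : ∀ x ∈ p, f x ∈ p) (hq : ∀ x ∈ q, f x ∈ q) :
    LinearMap.det f = LinearMap.det (f.restrict hp) * LinearMap.det (f.restrict hq) := by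
  let e := Submodule.prodEquivOfIsCompl p q h
  have key : f ∘ₗ (e : p × q →ₗ[ℂ] M)
      = (e : p × q →ₗ[ℂ] M) ∘ₗ ((f.restrict hp).prodMap (f.restrict hq)) := by
    ext x <;>
      simp [e, Submodule.coe_prodEquivOfIsCompl', LinearMap.restrict_apply]
  rw [← my_det_prodMap (f.restrict hp) (f.restrict hq)]
  exact my_det_conj _ f e key

private lemma my_restrict_bijective {M : Type} [AddCommGroup M] [Module ℂ M]
    [FiniteDimensional ℂ M]
    (f : M →ₗ[ℂ] M) (hf : Function.Bijective f) {p : Submodule ℂ M} (hp : ∀ x ∈ p, f x ∈ p) :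
    Function.Bijective (f.restrict hp) := by
  have hinj : Function.Injective (f.restrict hp) := by
    intro x y hxy
    apply Subtype.ext
    apply hf.1
    simpa [LinearMap.restrict_apply] using congrArg Subtype.val hxy
  exact ⟨hinj, LinearMap.injective_iff_surjective.mp hinj⟩

private lemma my_telescope (a D : ℕ → ℂ) : ∀ n : ℕ, (∀ j, j ≤ n → a j ≠ 0) →
    D 0 = a 0 → (∀ j, j < n → D (j + 1) = a j * a (j + 1)) →
    ∏ j ∈ Finset.range (n + 1), D j ^ ((-1 : ℤ) ^ j) = a n ^ ((-1 : ℤ) ^ n)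
  | 0, _, h0, _ => by simp [h0]
  | (n + 1), ha, h0, hs => by
    rw [Finset.prod_range_succ, my_telescope a D n (fun j hj => ha j (hj.trans (Nat.le_succ n))) h0
        (fun j hj => hs j (Nat.lt_succ_of_lt hj)),
      hs n (Nat.lt_succ_self n), mul_zpow, ← mul_assoc, pow_succ,
      ← zpow_add₀ (ha n (Nat.le_succ n))]
    simp

private def Uend {C : ℕ → Type} [∀ j, AddCommGroup (C j)] [∀ j, Module ℂ (C j)]
    (d : ∀ j, C j →ₗ[ℂ] C (j + 1)) (δ : ∀ j, C (j + 1) →ₗ[ℂ] C j) : ∀ j, C j →ₗ[ℂ] C j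
  | 0 => 0
  | (j + 1) => (d j).comp (δ j)

private def Dend {C : ℕ → Type} [∀ j, AddCommGroup (C j)] [∀ j, Module ℂ (C j)]
    (d : ∀ j, C j →ₗ[ℂ] C (j + 1)) (δ : ∀ j, C (j + 1) →ₗ[ℂ] C j) (j : ℕ) : C j →ₗ[ℂ] C j :=
  (δ j).comp (d j)

set_option maxHeartbeats 2000000 in
/-- Let `(C^•, d, δ)` be a finite bi-graded complex of finite-dimensional
complex vector spaces whose combinatorial Laplacian `Δ j` is bijective for `j = 0, …, n`
(here `δ j : C (j+1) →ₗ C j` is the paper's `δ_{j+1}`). Then the alternating product of the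
determinants of the Laplacians is trivial: `∏_{j=0}^{n} det (Δ j) ^ ((-1)^j) = 1`. -/
theorem alternating_product_det_laplacian_eq_one
    (n : ℕ) (C : ℕ → Type) [∀ j, AddCommGroup (C j)] [∀ j, Module ℂ (C j)]
    [∀ j, FiniteDimensional ℂ (C j)]
    (hC : ∀ j, n < j → Subsingleton (C j))
    (d : ∀ j, C j →ₗ[ℂ] C (j + 1)) (δ : ∀ j, C (j + 1) →ₗ[ℂ] C j)
    (hd : ∀ j, (d (j + 1)).comp (d j) = 0)
    (hδ : ∀ j, (δ j).comp (δ (j + 1)) = 0)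
    (Δ : ∀ j, C j →ₗ[ℂ] C j)
    (hΔ0 : Δ 0 = (δ 0).comp (d 0))
    (hΔsucc : ∀ j, Δ (j + 1) = (δ (j + 1)).comp (d (j + 1)) + (d j).comp (δ j))
    (hbij : ∀ j, j ≤ n → Function.Bijective ⇑(Δ j)) :
    ∏ j ∈ Finset.range (n + 1), LinearMap.det (Δ j) ^ ((-1 : ℤ) ^ j) = 1 := by
  classical
  have hU0 : Uend d δ 0 = 0 := rfl
  have hΔ : ∀ j, Δ j = Dend d δ j + Uend d δ j := by
    intro j
    cases j with
    | zero => rw [hΔ0]; ext x; simp [Dend, hU0]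
    | succ k => rw [hΔsucc k]; rfl
  have hDU : ∀ j (x : C j), Dend d δ j (Uend d δ j x) = 0 := by
    intro j x
    cases j with
    | zero => simp [hU0]
    | succ k =>
      have h1 : d (k + 1) (d k (δ k x)) = 0 := by
        simpa using LinearMap.ext_iff.mp (hd k) (δ k x)
      show δ (k + 1) (d (k + 1) (d k (δ k x))) = 0
      rw [h1, map_zero]
  have hUD : ∀ j (x : C j), Uend d δ j (Dend d δ j x) = 0 := by
    intro j x
    cases j with
    | zero => simp [hU0]
    | succ k =>
      have h1 : δ k (δ (k + 1) (d (k + 1) x)) = 0 := by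
        simpa using LinearMap.ext_iff.mp (hδ k) (d (k + 1) x)
      show d k (δ k (δ (k + 1) (d (k + 1) x))) = 0
      rw [h1, map_zero]
  -- invariance
  have hUK : ∀ j, ∀ x ∈ LinearMap.ker (Dend d δ j), Uend d δ j x ∈ LinearMap.ker (Dend d δ j) :=
    fun j x _ => LinearMap.mem_ker.mpr (hDU j x)
  have hDL : ∀ j, ∀ x ∈ LinearMap.ker (Uend d δ j), Dend d δ j x ∈ LinearMap.ker (Uend d δ j) :=
    fun j x _ => LinearMap.mem_ker.mpr (hUD j x)
  have hΔK : ∀ j, ∀ x ∈ LinearMap.ker (Dend d δ j), Δ j x ∈ LinearMap.ker (Dend d δ j) := by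
    intro j x hx
    rw [LinearMap.mem_ker] at hx ⊢
    rw [hΔ j]
    simp [map_add, hx, hDU j x]
  have hΔL : ∀ j, ∀ x ∈ LinearMap.ker (Uend d δ j), Δ j x ∈ LinearMap.ker (Uend d δ j) := by
    intro j x hx
    rw [LinearMap.mem_ker] at hx ⊢
    rw [hΔ j]
    simp [map_add, hx, hUD j x]
  -- restrictions of Δ agree with restrictions of the pieces
  have hrK : ∀ j, (Δ j).restrict (hΔK j) = (Uend d δ j).restrict (hUK j) := by
    intro j
    apply LinearMap.ext; intro x
    apply Subtype.ext
    have hx : Dend d δ j (x : C j) = 0 := LinearMap.mem_ker.mp x.2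
    simp [LinearMap.restrict_apply, hΔ j, hx]
  have hrL : ∀ j, (Δ j).restrict (hΔL j) = (Dend d δ j).restrict (hDL j) := by
    intro j
    apply LinearMap.ext; intro x
    apply Subtype.ext
    have hx : Uend d δ j (x : C j) = 0 := LinearMap.mem_ker.mp x.2
    simp [LinearMap.restrict_apply, hΔ j, hx]
  -- complementarity
  have hcompl : ∀ j, j ≤ n →
      IsCompl (LinearMap.ker (Dend d δ j)) (LinearMap.ker (Uend d δ j)) := by
    intro j hj
    constructor
    · rw [disjoint_iff_inf_le]
      intro x hx
      obtain ⟨h1, h2⟩ := Submodule.mem_inf.mp hx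
      have h1' := LinearMap.mem_ker.mp h1
      have h2' := LinearMap.mem_ker.mp h2
      have hΔx : Δ j x = 0 := by rw [hΔ j]; simp [h1', h2']
      have hx0 : x = 0 := by
        apply (hbij j hj).1
        simpa using hΔx
      simp [hx0]
    · rw [codisjoint_iff_le_sup]
      intro x _
      obtain ⟨z, hz⟩ := (hbij j hj).2 x
      have hx : x = Uend d δ j z + Dend d δ j z := by
        rw [← hz, hΔ j]; simp [add_comm]
      rw [hx]
      exact Submodule.add_mem _ (Submodule.mem_sup_left (LinearMap.mem_ker.mpr (hDU j z)))
        (Submodule.mem_sup_right (LinearMap.mem_ker.mpr (hUD j z)))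
  -- nonvanishing of the determinants a j
  have haneq : ∀ j, j ≤ n → LinearMap.det ((Dend d δ j).restrict (hDL j)) ≠ 0 := by
    intro j hj
    rw [← hrL j]
    have hb := my_restrict_bijective (Δ j) (hbij j hj) (hΔL j)
    exact (LinearEquiv.isUnit_det' (LinearEquiv.ofBijective _ hb)).ne_zero
  -- boundary degenerations
  have hK0 : LinearMap.ker (Dend d δ 0) = ⊥ := by
    rw [LinearMap.ker_eq_bot]
    have hD0 : Dend d δ 0 = Δ 0 := hΔ0.symm
    rw [hD0]
    exact (hbij 0 (Nat.zero_le n)).1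
  have hLn : LinearMap.ker (Uend d δ n) = ⊥ := by
    have hsub : Subsingleton (C (n + 1)) := hC (n + 1) (Nat.lt_succ_self n)
    have hdn : d n = 0 := Subsingleton.elim _ _
    rw [LinearMap.ker_eq_bot']
    intro x hx
    have hΔx : Δ n x = 0 := by
      rw [hΔ n]; simp [Dend, hdn, hx]
    exact (hbij n le_rfl).1 (by simpa using hΔx)
  have hdetK0 : LinearMap.det ((Uend d δ 0).restrict (hUK 0)) = 1 := by
    haveI : Subsingleton (LinearMap.ker (Dend d δ 0)) := by rw [hK0]; infer_instance
    exact LinearMap.det_eq_one_of_subsingleton _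
  have hdetLn : LinearMap.det ((Dend d δ n).restrict (hDL n)) = 1 := by
    haveI : Subsingleton (LinearMap.ker (Uend d δ n)) := by rw [hLn]; infer_instance
    exact LinearMap.det_eq_one_of_subsingleton _
  -- the map d j carries L j isomorphically onto K (j+1), conjugating the pieces
  have hmapd : ∀ j, ∀ x ∈ LinearMap.ker (Uend d δ j),
      d j x ∈ LinearMap.ker (Dend d δ (j + 1)) := by
    intro j x _
    rw [LinearMap.mem_ker]
    show δ (j + 1) (d (j + 1) (d j x)) = 0
    have h1 : d (j + 1) (d j x) = 0 := by simpa using LinearMap.ext_iff.mp (hd j) x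
    rw [h1, map_zero]
  have hconj : ∀ j, j + 1 ≤ n →
      LinearMap.det ((Uend d δ (j + 1)).restrict (hUK (j + 1)))
        = LinearMap.det ((Dend d δ j).restrict (hDL j)) := by
    intro j hj
    have hjn : j ≤ n := Nat.le_of_succ_le hj
    have hbd : Function.Bijective ((d j).restrict (hmapd j)) := by
      constructor
      · intro x y hxy
        have hxy' : d j (x : C j) = d j (y : C j) := by
          simpa [LinearMap.restrict_apply] using congrArg Subtype.val hxy
        have hΔxy : Δ j (x : C j) = Δ j (y : C j) := by
          rw [hΔ j]
          simp only [LinearMap.add_apply]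
          have hux : Uend d δ j (x : C j) = 0 := LinearMap.mem_ker.mp x.2
          have huy : Uend d δ j (y : C j) = 0 := LinearMap.mem_ker.mp y.2
          rw [hux, huy]
          show δ j (d j (x : C j)) + 0 = δ j (d j (y : C j)) + 0
          rw [hxy']
        exact Subtype.ext ((hbij j hjn).1 hΔxy)
      · intro y
        have hbU : Function.Bijective ((Uend d δ (j + 1)).restrict (hUK (j + 1))) := by
          rw [← hrK (j + 1)]
          exact my_restrict_bijective (Δ (j + 1)) (hbij (j + 1) hj) (hΔK (j + 1))
        obtain ⟨w, hw⟩ := hbU.2 y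
        refine ⟨⟨δ j (w : C (j + 1)), ?_⟩, ?_⟩
        · rw [LinearMap.mem_ker]
          cases j with
          | zero => simp [hU0]
          | succ k =>
            show d k (δ k (δ (k + 1) (w : C (k + 2)))) = 0
            have h1 : δ k (δ (k + 1) (w : C (k + 2))) = 0 := by
              simpa using LinearMap.ext_iff.mp (hδ k) (w : C (k + 2))
            rw [h1, map_zero]
        · apply Subtype.ext
          have hw' : Uend d δ (j + 1) (w : C (j + 1)) = (y : C (j + 1)) := by
            simpa [LinearMap.restrict_apply] using congrArg Subtype.val hw
          exact hw'
    apply my_det_conj _ _ (LinearEquiv.ofBijective _ hbd)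
    apply LinearMap.ext; intro x
    apply Subtype.ext
    show Uend d δ (j + 1) (d j (x : C j)) = d j (Dend d δ j (x : C j))
    rfl
  -- assemble
  have h0 : LinearMap.det (Δ 0) = LinearMap.det ((Dend d δ 0).restrict (hDL 0)) := by
    rw [my_det_restrict_mul (Δ 0) (hcompl 0 (Nat.zero_le n)) (hΔK 0) (hΔL 0), hrK 0, hrL 0,
      hdetK0, one_mul]
  have hs : ∀ j, j < n → LinearMap.det (Δ (j + 1)) =
      LinearMap.det ((Dend d δ j).restrict (hDL j)) *
        LinearMap.det ((Dend d δ (j + 1)).restrict (hDL (j + 1))) := by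
    intro j hj
    rw [my_det_restrict_mul (Δ (j + 1)) (hcompl (j + 1) hj) (hΔK (j + 1)) (hΔL (j + 1)),
      hrK (j + 1), hrL (j + 1), hconj j hj]
  have key := my_telescope (fun j => LinearMap.det ((Dend d δ j).restrict (hDL j)))
    (fun j => LinearMap.det (Δ j)) n haneq h0 hs
  refine key.trans ?_
  show LinearMap.det ((Dend d δ n).restrict (hDL n)) ^ ((-1 : ℤ) ^ n) = 1
  rw [hdetLn, one_zpow]
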